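/- The nested cube-root radical built from powers of 4 evaluates to 2^{3/2}: the doubly-indexed truncations F m 1 converge to 4^{3/4} = 2^{3/2} as m → ∞; that is, ∛(4∛(4²∛(4³∛(...)))) = 2^{3/2}. -/

import Mathlib

noncomputable def F : ℕ → ℕ → ℝ
  | 0, _ => 1
  | m + 1, j => ((4 : ℝ) ^ j * F m (j + 1)) ^ (1 / 3 : ℝ)

noncomputable def E : ℕ → ℕ → ℝ
  | 0, _ => 0
  | m + 1, j => ((j : ℝ) + E m (j + 1)) / 3

lemma F_eq_rpow : ∀ m j, F m j = (4 : ℝ) ^ (E m j) := by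
  intro m
  induction m with
  | zero => intro j; simp [F, E]
  | succ m ih =>
    intro j
    rw [F, E, ih (j + 1)]
    rw [show ((4:ℝ) ^ j : ℝ) = (4:ℝ) ^ ((j : ℝ)) from (Real.rpow_natCast 4 j).symm,
      ← Real.rpow_add (by norm_num), ← Real.rpow_mul (by norm_num)]
    ring_nf

lemma E_closed : ∀ m j, E m j = (j : ℝ)/2 + 1/4 - ((j : ℝ)/2 + 1/4 + (m : ℝ)/2) / 3 ^ m := by
  intro m
  induction m with
  | zero => intro j; simp [E]
  | succ m ih =>
    intro j
    rw [E, ih (j + 1)]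
    push_cast
    have h3 : (3:ℝ) ^ m ≠ 0 := by positivity
    field_simp
    ring

theorem nested_cbrt_powers_of_four :
    Filter.Tendsto (fun m => F m 1) Filter.atTop (nhds ((4 : ℝ) ^ ((3 / 4) : ℝ))) ∧
      (4 : ℝ) ^ ((3 / 4) : ℝ) = (2 : ℝ) ^ ((3 / 2) : ℝ) := by
  constructor
  · have hE : Filter.Tendsto (fun m => E m 1) Filter.atTop (nhds (3/4 : ℝ)) := by
      have key : ∀ m : ℕ, E m 1 = 3/4 - (3/4 + (m:ℝ)/2) * (1/3 : ℝ)^m := by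
        intro m
        rw [E_closed]
        push_cast
        have h3 : (3:ℝ) ^ m ≠ 0 := by positivity
        rw [one_div_pow]
        field_simp
        ring
      simp only [key]
      have h1 : Filter.Tendsto (fun m : ℕ => (3/4 : ℝ) * (1/3:ℝ)^m) Filter.atTop (nhds 0) := by
        simpa using (tendsto_pow_atTop_nhds_zero_of_lt_one (by norm_num : (0:ℝ) ≤ 1/3)
          (by norm_num : (1/3:ℝ) < 1)).const_mul (3/4 : ℝ)
      have h2 : Filter.Tendsto (fun m : ℕ => ((m:ℝ)/2) * (1/3:ℝ)^m) Filter.atTop (nhds 0) := by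
        have := tendsto_pow_const_mul_const_pow_of_abs_lt_one 1
          (by rw [abs_of_pos]; norm_num; norm_num : |(1/3:ℝ)| < 1)
        have := this.const_mul (1/2 : ℝ)
        simpa [mul_comm, mul_assoc, mul_left_comm, div_eq_mul_inv] using this
      have := (h1.add h2).const_sub (3/4 : ℝ)
      simp only [add_mul] at this ⊢
      simpa using this
    have : Filter.Tendsto (fun m => (4:ℝ) ^ (E m 1)) Filter.atTop
        (nhds ((4:ℝ) ^ ((3/4 : ℝ)))) :=
      Filter.Tendsto.rpow tendsto_const_nhds hE (Or.inl (by norm_num))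
    simpa [F_eq_rpow] using this
  · rw [show (4:ℝ) = (2:ℝ) ^ (2:ℕ) by norm_num, ← Real.rpow_natCast 2 2,
      ← Real.rpow_mul (by norm_num)]
    norm_num
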